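/- Let (Ω, 𝒫) be a probability space, let K be a positive integer, let α : Fin K → ℝ satisfy 0 < α_k ≤ 1 for every k, and let ε : Fin K → Ω → ℝ be an independent family of random variables each with law gaussianReal 0 1 (the standard real Gaussian). Fix y₀ ∈ ℝ and define the forward diffusion process recursively by Y₀ = y₀ (constant) and Y_{k+1}(ω) = √(α_{k+1}) · Y_k(ω) + √(1 − α_{k+1}) · ε_{k+1}(ω). Then for every k ≤ K, the pushforward law of Y_k under 𝒫 is the Gaussian measure gaussianReal (√(ᾱ_k) · y₀) (1 − ᾱ_k), where ᾱ_k = ∏_{s=1}^{k} α_s. (Closed-form expression of the DDPM forward process.) -/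

import Mathlib

open MeasureTheory ProbabilityTheory Real
open scoped BigOperators ENNReal NNReal

lemma gaussian_pdf_prod (μ₁ μ₂ : ℝ) (v₁ v₂ : ℝ≥0) (h₁ : v₁ ≠ 0) (h₂ : v₂ ≠ 0) (z x : ℝ) :
    gaussianPDFReal μ₁ v₁ x * gaussianPDFReal μ₂ v₂ (z - x) =
    gaussianPDFReal (μ₁ + μ₂) (v₁ + v₂) z *
      gaussianPDFReal ((v₂ * μ₁ + v₁ * (z - μ₂)) / (v₁ + v₂)) (v₁ * v₂ / (v₁ + v₂)) x := by
  have hv₁ : (0:ℝ) < v₁ := lt_of_le_of_ne v₁.coe_nonneg (by exact_mod_cast (Ne.symm h₁))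
  have hv₂ : (0:ℝ) < v₂ := lt_of_le_of_ne v₂.coe_nonneg (by exact_mod_cast (Ne.symm h₂))
  have hv : (0:ℝ) < (v₁:ℝ) + v₂ := by linarith
  have hπ := Real.pi_pos
  simp only [gaussianPDFReal, NNReal.coe_div, NNReal.coe_mul, NNReal.coe_add]
  rw [mul_mul_mul_comm, ← mul_inv, ← Real.exp_add, mul_mul_mul_comm, ← mul_inv, ← Real.exp_add]
  congr 2
  · rw [← Real.sqrt_mul (by positivity), ← Real.sqrt_mul (by positivity)]
    congr 1
    field_simp
  · field_simp
    ring

lemma lintegral_gaussianPDF_conv (μ₁ μ₂ : ℝ) {v₁ v₂ : ℝ≥0} (h₁ : v₁ ≠ 0) (h₂ : v₂ ≠ 0) (z : ℝ) :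
    ∫⁻ x, gaussianPDF μ₁ v₁ x * gaussianPDF μ₂ v₂ (z - x) =
      gaussianPDF (μ₁ + μ₂) (v₁ + v₂) z := by
  have hw : v₁ * v₂ / (v₁ + v₂) ≠ 0 := by
    refine div_ne_zero (mul_ne_zero h₁ h₂) ?_
    simp [h₁]
  calc ∫⁻ x, gaussianPDF μ₁ v₁ x * gaussianPDF μ₂ v₂ (z - x)
      = ∫⁻ x, gaussianPDF (μ₁ + μ₂) (v₁ + v₂) z *
          gaussianPDF ((v₂ * μ₁ + v₁ * (z - μ₂)) / (v₁ + v₂)) (v₁ * v₂ / (v₁ + v₂)) x := by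
        congr 1 with x
        rw [gaussianPDF, gaussianPDF, ← ENNReal.ofReal_mul (gaussianPDFReal_nonneg _ _ _),
          gaussian_pdf_prod μ₁ μ₂ v₁ v₂ h₁ h₂ z x, gaussianPDF, gaussianPDF,
          ENNReal.ofReal_mul (gaussianPDFReal_nonneg _ _ _)]
    _ = gaussianPDF (μ₁ + μ₂) (v₁ + v₂) z := by
        rw [lintegral_const_mul _ (measurable_gaussianPDF _ _),
          lintegral_gaussianPDF_eq_one _ hw, mul_one]

lemma gaussianReal_conv (μ₁ μ₂ : ℝ) {v₁ v₂ : ℝ≥0} (h₁ : v₁ ≠ 0) (h₂ : v₂ ≠ 0) :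
    Measure.map (fun p : ℝ × ℝ => p.1 + p.2)
      ((gaussianReal μ₁ v₁).prod (gaussianReal μ₂ v₂)) = gaussianReal (μ₁ + μ₂) (v₁ + v₂) := by
  have h12 : v₁ + v₂ ≠ 0 := by simp [h₁]
  have hf := measurable_gaussianPDF μ₁ v₁
  have hg := measurable_gaussianPDF μ₂ v₂
  rw [gaussianReal_of_var_ne_zero _ h₁, gaussianReal_of_var_ne_zero _ h₂,
    gaussianReal_of_var_ne_zero _ h12]
  ext s hs
  have hA : MeasurableSet ((fun p : ℝ × ℝ => p.1 + p.2) ⁻¹' s) :=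
    (measurable_fst.add measurable_snd) hs
  rw [Measure.map_apply (show Measurable (fun p : ℝ × ℝ => p.1 + p.2) from measurable_fst.add measurable_snd) hs, withDensity_apply _ hs,
    Measure.prod_apply hA,
    lintegral_withDensity_eq_lintegral_mul _ hf (measurable_measure_prodMk_left hA)]
  have step1 : ∀ x : ℝ, (volume.withDensity (gaussianPDF μ₂ v₂))
      (Prod.mk x ⁻¹' ((fun p : ℝ × ℝ => p.1 + p.2) ⁻¹' s)) =
      ∫⁻ z, s.indicator (fun _ => (1:ℝ≥0∞)) z * gaussianPDF μ₂ v₂ (z - x) := by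
    intro x
    have hBx : MeasurableSet {y : ℝ | x + y ∈ s} := (measurable_const.add measurable_id) hs
    rw [show Prod.mk x ⁻¹' ((fun p : ℝ × ℝ => p.1 + p.2) ⁻¹' s) = {y : ℝ | x + y ∈ s} from rfl,
      withDensity_apply _ hBx, ← lintegral_indicator hBx]
    have : ∀ y : ℝ, ({y : ℝ | x + y ∈ s}).indicator (gaussianPDF μ₂ v₂) y =
        (fun z => s.indicator (fun _ => (1:ℝ≥0∞)) z * gaussianPDF μ₂ v₂ (z - x)) (y + x) := by
      intro y
      simp only [Set.indicator, Set.mem_setOf_eq, add_sub_cancel_right]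
      by_cases h : x + y ∈ s
      · simp [h, add_comm y x]
      · simp [h, add_comm y x]
    simp_rw [this]
    exact lintegral_add_right_eq_self (μ := volume)
      (fun z => s.indicator (fun _ => (1:ℝ≥0∞)) z * gaussianPDF μ₂ v₂ (z - x)) x
  simp_rw [step1, Pi.mul_apply]
  have hfin : ∀ a : ℝ, gaussianPDF μ₁ v₁ a ≠ ⊤ := fun a => ENNReal.ofReal_ne_top
  have pull : ∀ a : ℝ, gaussianPDF μ₁ v₁ a *
      ∫⁻ z, s.indicator (fun _ => (1:ℝ≥0∞)) z * gaussianPDF μ₂ v₂ (z - a) =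
      ∫⁻ z, gaussianPDF μ₁ v₁ a * (s.indicator (fun _ => (1:ℝ≥0∞)) z * gaussianPDF μ₂ v₂ (z - a)) :=
    fun a => (lintegral_const_mul' _ _ (hfin a)).symm
  simp_rw [pull]
  rw [lintegral_lintegral_swap]
  swap
  · apply Measurable.aemeasurable
    apply Measurable.mul
    · exact hf.comp measurable_fst
    · exact ((measurable_one.indicator hs).comp measurable_snd).mul
        (hg.comp (measurable_snd.sub measurable_fst))
  · have step2 : ∀ z : ℝ, ∫⁻ x, gaussianPDF μ₁ v₁ x *
        (s.indicator (fun _ => (1:ℝ≥0∞)) z * gaussianPDF μ₂ v₂ (z - x)) =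
        s.indicator (fun _ => (1:ℝ≥0∞)) z * gaussianPDF (μ₁ + μ₂) (v₁ + v₂) z := by
      intro z
      simp_rw [show ∀ x : ℝ, gaussianPDF μ₁ v₁ x *
          (s.indicator (fun _ => (1:ℝ≥0∞)) z * gaussianPDF μ₂ v₂ (z - x)) =
          s.indicator (fun _ => (1:ℝ≥0∞)) z * (gaussianPDF μ₁ v₁ x * gaussianPDF μ₂ v₂ (z - x))
        from fun x => by ring]
      rw [lintegral_const_mul' _ _ (by
        by_cases h : z ∈ s <;> simp [Set.indicator, h]),
        lintegral_gaussianPDF_conv μ₁ μ₂ h₁ h₂ z]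
    simp_rw [step2]
    rw [← lintegral_indicator hs]
    congr 1 with z
    simp only [Set.indicator]
    by_cases h : z ∈ s <;> simp [h]

lemma indepFun_gaussian_add {Ω : Type*} [MeasurableSpace Ω] {P : Measure Ω}
    [IsProbabilityMeasure P] {X Y : Ω → ℝ} (hX : Measurable X) (hY : Measurable Y)
    (h : IndepFun X Y P) {μ₁ μ₂ : ℝ} {v₁ v₂ : ℝ≥0}
    (hXl : Measure.map X P = gaussianReal μ₁ v₁)
    (hYl : Measure.map Y P = gaussianReal μ₂ v₂) :
    Measure.map (fun ω => X ω + Y ω) P = gaussianReal (μ₁ + μ₂) (v₁ + v₂) := by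
  by_cases h₁ : v₁ = 0
  · subst h₁
    have hXe : X =ᵐ[P] fun _ => μ₁ := by
      have : P (X ⁻¹' {μ₁}ᶜ) = 0 := by
        rw [← Measure.map_apply hX (MeasurableSet.singleton μ₁).compl, hXl,
          gaussianReal_zero_var, Measure.dirac_apply' _ (MeasurableSet.singleton μ₁).compl]
        simp
      filter_upwards [measure_eq_zero_iff_ae_notMem.mp this] with ω hω
      simpa using hω
    have : (fun ω => X ω + Y ω) =ᵐ[P] fun ω => μ₁ + Y ω := by
      filter_upwards [hXe] with ω hω; rw [hω]
    rw [Measure.map_congr this,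
      show (fun ω => μ₁ + Y ω) = (fun x : ℝ => μ₁ + x) ∘ Y from rfl,
      ← Measure.map_map (measurable_const_add μ₁) hY, hYl, gaussianReal_map_const_add,
      add_comm μ₂ μ₁, zero_add]
  by_cases h₂ : v₂ = 0
  · subst h₂
    have hYe : Y =ᵐ[P] fun _ => μ₂ := by
      have : P (Y ⁻¹' {μ₂}ᶜ) = 0 := by
        rw [← Measure.map_apply hY (MeasurableSet.singleton μ₂).compl, hYl,
          gaussianReal_zero_var, Measure.dirac_apply' _ (MeasurableSet.singleton μ₂).compl]
        simp
      filter_upwards [measure_eq_zero_iff_ae_notMem.mp this] with ω hω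
      simpa using hω
    have : (fun ω => X ω + Y ω) =ᵐ[P] fun ω => X ω + μ₂ := by
      filter_upwards [hYe] with ω hω; rw [hω]
    rw [Measure.map_congr this,
      show (fun ω => X ω + μ₂) = (fun x : ℝ => x + μ₂) ∘ X from rfl,
      ← Measure.map_map (measurable_add_const μ₂) hX, hXl, gaussianReal_map_add_const,
      add_zero]
  · have hpair : Measure.map (fun ω => (X ω, Y ω)) P =
        (gaussianReal μ₁ v₁).prod (gaussianReal μ₂ v₂) := by
      rw [← hXl, ← hYl]
      exact (indepFun_iff_map_prod_eq_prod_map_map hX.aemeasurable hY.aemeasurable).mp h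
    rw [show (fun ω => X ω + Y ω) = (fun p : ℝ × ℝ => p.1 + p.2) ∘ (fun ω => (X ω, Y ω))
        from rfl,
      ← Measure.map_map (show Measurable (fun p : ℝ × ℝ => p.1 + p.2) from measurable_fst.add measurable_snd) (hX.prodMk hY), hpair,
      gaussianReal_conv μ₁ μ₂ h₁ h₂]

/-- **Closed-form expression of the DDPM forward process.**
Let `ε₁, …, ε_K` be an independent family of standard real Gaussian random variables,
`0 < α_k ≤ 1`, and define `Y₀ = y₀` and `Y_{k+1} = √(α_{k+1})·Y_k + √(1 − α_{k+1})·ε_{k+1}`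
(here `α` and `ε` are 0-indexed by `Fin K`, so step `k+1` uses index `k`).
Then for every `k ≤ K`, the law of `Y_k` is the Gaussian with mean `√(ᾱ_k)·y₀` and
variance `1 − ᾱ_k`, where `ᾱ_k = ∏_{s=1}^{k} α_s`. -/
theorem ddpm_forward_closed_form {Ω : Type*} [MeasurableSpace Ω]
    (P : Measure Ω) [IsProbabilityMeasure P]
    (K : ℕ) (hK : 0 < K)
    (α : Fin K → ℝ) (hα : ∀ k, 0 < α k ∧ α k ≤ 1)
    (ε : Fin K → Ω → ℝ) (hε_meas : ∀ k, Measurable (ε k))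
    (hε_law : ∀ k, Measure.map (ε k) P = gaussianReal 0 1)
    (hε_indep : iIndepFun ε P)
    (y₀ : ℝ) (Y : ℕ → Ω → ℝ)
    (hY0 : Y 0 = fun _ => y₀)
    (hYrec : ∀ (k : ℕ) (hk : k < K), Y (k + 1) =
      fun ω => Real.sqrt (α ⟨k, hk⟩) * Y k ω + Real.sqrt (1 - α ⟨k, hk⟩) * ε ⟨k, hk⟩ ω)
    (k : ℕ) (hk : k ≤ K) :
    Measure.map (Y k) P =
      gaussianReal
        (Real.sqrt (∏ s ∈ Finset.univ.filter (fun s : Fin K => (s : ℕ) < k), α s) * y₀)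
        (Real.toNNReal (1 - ∏ s ∈ Finset.univ.filter (fun s : Fin K => (s : ℕ) < k), α s)) := by
  -- notation
  set S : ℕ → Finset (Fin K) := fun n => Finset.univ.filter (fun s : Fin K => (s : ℕ) < n)
    with hS
  -- basic product facts
  have hpos : ∀ n, 0 < ∏ s ∈ S n, α s := fun n =>
    Finset.prod_pos fun i _ => (hα i).1
  have hle1 : ∀ n, ∏ s ∈ S n, α s ≤ 1 := fun n =>
    Finset.prod_le_one (fun i _ => (hα i).1.le) (fun i _ => (hα i).2)
  -- filter at succ
  have hins : ∀ (n : ℕ) (hn : n < K), S (n + 1) = insert ⟨n, hn⟩ (S n) := by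
    intro n hn
    ext i
    simp only [hS, Finset.mem_filter, Finset.mem_univ, true_and, Finset.mem_insert, Fin.ext_iff]
    omega
  have hnotmem : ∀ (n : ℕ) (hn : n < K), (⟨n, hn⟩ : Fin K) ∉ S n := by
    intro n hn
    simp [hS]
  -- factorization of Y n through the ε's with index < n
  have hfact : ∀ n, n ≤ K → ∃ g : (↥(S n) → ℝ) → ℝ,
      Measurable g ∧ Y n = fun ω => g (fun i => ε i ω) := by
    intro n
    induction n with
    | zero => exact fun _ => ⟨fun _ => y₀, measurable_const, by rw [hY0]⟩
    | succ n ih =>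
      intro hn1
      have hnK : n < K := hn1
      obtain ⟨g, hgm, hgY⟩ := ih (Nat.le_of_succ_le hn1)
      have hmem1 : ∀ i : ↥(S n), (i : Fin K) ∈ S (n + 1) := by
        intro i
        have := i.2
        simp only [hS, Finset.mem_filter, Finset.mem_univ, true_and] at this ⊢
        omega
      have hmem2 : (⟨n, hnK⟩ : Fin K) ∈ S (n + 1) := by
        simp [hS]
      refine ⟨fun v => Real.sqrt (α ⟨n, hnK⟩) * g (fun i => v ⟨i.1, hmem1 i⟩)
        + Real.sqrt (1 - α ⟨n, hnK⟩) * v ⟨⟨n, hnK⟩, hmem2⟩, ?_, ?_⟩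
      · exact ((hgm.comp (measurable_pi_lambda _ fun i =>
          measurable_pi_apply _)).const_mul _).add ((measurable_pi_apply _).const_mul _)
      · rw [hYrec n hnK]
        funext ω
        simp only
        rw [show Y n ω = g (fun i => ε i ω) from congrFun hgY ω]
  -- main induction on the law
  have main : ∀ n, n ≤ K → Measure.map (Y n) P =
      gaussianReal (Real.sqrt (∏ s ∈ S n, α s) * y₀)
        (Real.toNNReal (1 - ∏ s ∈ S n, α s)) := by
    intro n
    induction n with
    | zero =>
      intro _
      have h0 : S 0 = ∅ := by ext i; simp [hS]
      rw [hY0, h0, Finset.prod_empty, Real.sqrt_one, one_mul, sub_self, Real.toNNReal_zero,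
        gaussianReal_zero_var, Measure.map_const, measure_univ, one_smul]
    | succ n ih =>
      intro hn1
      have hnK : n < K := hn1
      obtain ⟨g, hgm, hgY⟩ := hfact n (Nat.le_of_succ_le hn1)
      have hYm : Measurable (Y n) := by
        rw [hgY]; exact hgm.comp (measurable_pi_lambda _ fun i => hε_meas _)
      have hα1 : 0 < α ⟨n, hnK⟩ := (hα _).1
      have hα2 : α ⟨n, hnK⟩ ≤ 1 := (hα _).2
      -- independence of Y n and ε ⟨n, hnK⟩
      have hindep : IndepFun (Y n) (ε ⟨n, hnK⟩) P := by
        have hd : Disjoint (S n) {(⟨n, hnK⟩ : Fin K)} :=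
          Finset.disjoint_singleton_right.mpr (hnotmem n hnK)
        have h := hε_indep.indepFun_finset (S n) {⟨n, hnK⟩} hd hε_meas
        have h2 := h.comp hgm (measurable_pi_apply
          (⟨⟨n, hnK⟩, Finset.mem_singleton_self _⟩ : ({(⟨n, hnK⟩ : Fin K)} : Finset (Fin K))))
        rw [hgY]
        exact h2
      -- independence of the scaled variables
      have hindep' : IndepFun (fun ω => Real.sqrt (α ⟨n, hnK⟩) * Y n ω)
          (fun ω => Real.sqrt (1 - α ⟨n, hnK⟩) * ε ⟨n, hnK⟩ ω) P :=
        hindep.comp (measurable_const_mul _) (measurable_const_mul _)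
      -- laws of the scaled variables
      have hXl : Measure.map (fun ω => Real.sqrt (α ⟨n, hnK⟩) * Y n ω) P =
          gaussianReal (Real.sqrt (α ⟨n, hnK⟩) * (Real.sqrt (∏ s ∈ S n, α s) * y₀))
            (NNReal.mk ((Real.sqrt (α ⟨n, hnK⟩))^2) (sq_nonneg _) * Real.toNNReal (1 - ∏ s ∈ S n, α s)) := by
        rw [show (fun ω => Real.sqrt (α ⟨n, hnK⟩) * Y n ω)
            = (Real.sqrt (α ⟨n, hnK⟩) * ·) ∘ Y n from rfl,
          ← Measure.map_map (measurable_const_mul _) hYm, ih (Nat.le_of_succ_le hn1),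
          gaussianReal_map_const_mul]
      have hZl : Measure.map (fun ω => Real.sqrt (1 - α ⟨n, hnK⟩) * ε ⟨n, hnK⟩ ω) P =
          gaussianReal (Real.sqrt (1 - α ⟨n, hnK⟩) * 0)
            (NNReal.mk ((Real.sqrt (1 - α ⟨n, hnK⟩))^2) (sq_nonneg _) * 1) := by
        rw [show (fun ω => Real.sqrt (1 - α ⟨n, hnK⟩) * ε ⟨n, hnK⟩ ω)
            = (Real.sqrt (1 - α ⟨n, hnK⟩) * ·) ∘ ε ⟨n, hnK⟩ from rfl,
          ← Measure.map_map (measurable_const_mul _) (hε_meas _), hε_law _,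
          gaussianReal_map_const_mul]
      have hmap := indepFun_gaussian_add (hYm.const_mul _) ((hε_meas _).const_mul _)
        hindep' hXl hZl
      have hrw : Y (n + 1) = fun ω => (fun ω => Real.sqrt (α ⟨n, hnK⟩) * Y n ω) ω
          + (fun ω => Real.sqrt (1 - α ⟨n, hnK⟩) * ε ⟨n, hnK⟩ ω) ω := hYrec n hnK
      rw [hrw, hmap]
      have hprod : ∏ s ∈ S (n + 1), α s = α ⟨n, hnK⟩ * ∏ s ∈ S n, α s := by
        rw [hins n hnK, Finset.prod_insert (hnotmem n hnK)]
      congr 1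
      · rw [hprod, Real.sqrt_mul hα1.le]
        ring
      · apply NNReal.coe_injective
        push_cast
        rw [Real.coe_toNNReal _ (by have := hle1 n; linarith),
          Real.coe_toNNReal _ (by have := hle1 (n + 1); linarith),
          Real.sq_sqrt hα1.le, Real.sq_sqrt (by linarith), hprod]
        ring
  exact main k hk
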